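/- If X is a Tychonoff space, Y ⊆ X is dense, and C_p(Y|X) is projectively Menger, then X is pseudocompact. -/

import Mathlib

noncomputable def phiFun (c : ℕ → ℝ) (t : ℝ) : ℝ :=
  c 0 + ∑' k : ℕ, (c (k + 1) - c k) * min 1 (max (t - k) 0)

lemma phiFun_eq_sum (c : ℕ → ℝ) {t : ℝ} {K : ℕ} (h : t < K) :
    phiFun c t = c 0 + ∑ k ∈ Finset.range K, (c (k + 1) - c k) * min 1 (max (t - k) 0) := by
  unfold phiFun
  congr 1
  apply tsum_eq_sum
  intro k hk
  have hk' : (K : ℝ) ≤ k := by exact_mod_cast Nat.le_of_not_lt (by simpa using hk)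
  have h0 : t - k ≤ 0 := by linarith
  rw [max_eq_right h0, min_eq_right zero_le_one, mul_zero]

lemma phiFun_continuous (c : ℕ → ℝ) : Continuous (phiFun c) := by
  rw [continuous_iff_continuousAt]
  intro t
  set K : ℕ := ⌊max t 0⌋₊ + 1 with hK
  have htK : t < (K : ℝ) := by
    have := Nat.lt_floor_add_one (max t 0)
    have h1 : t ≤ max t 0 := le_max_left _ _
    push_cast [hK]
    linarith
  have hcont : Continuous fun s : ℝ =>
      c 0 + ∑ k ∈ Finset.range K, (c (k + 1) - c k) * min 1 (max (s - k) 0) := by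
    apply continuous_const.add
    apply continuous_finset_sum
    intro k _
    exact continuous_const.mul (continuous_const.min ((continuous_sub_right _).max continuous_const))
  apply hcont.continuousAt.congr
  filter_upwards [Iio_mem_nhds htK] with s hs
  exact (phiFun_eq_sum c hs).symm

lemma phiFun_mono (c : ℕ → ℝ) (hc : Monotone c) : Monotone (phiFun c) := by
  intro s t hst
  set K : ℕ := ⌊max t 0⌋₊ + 1 with hK
  have htK : t < (K : ℝ) := by
    have := Nat.lt_floor_add_one (max t 0)
    have h1 : t ≤ max t 0 := le_max_left _ _
    push_cast [hK]
    linarith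
  have hsK : s < (K : ℝ) := lt_of_le_of_lt hst htK
  rw [phiFun_eq_sum c hsK, phiFun_eq_sum c htK]
  apply add_le_add_right
  apply Finset.sum_le_sum
  intro k _
  apply mul_le_mul_of_nonneg_left _ (sub_nonneg.2 (hc (Nat.le_succ k)))
  exact min_le_min le_rfl (max_le_max (by linarith) le_rfl)

lemma phiFun_nat (c : ℕ → ℝ) (m : ℕ) : phiFun c m = c m := by
  have hlt : (m : ℝ) < ((m + 1 : ℕ) : ℝ) := by push_cast; linarith
  rw [phiFun_eq_sum c hlt, Finset.sum_range_succ]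
  have h1 : ∀ k ∈ Finset.range m, (c (k + 1) - c k) * min 1 (max ((m : ℝ) - k) 0)
      = c (k + 1) - c k := by
    intro k hk
    have hk' : (k : ℝ) + 1 ≤ m := by
      have := Finset.mem_range.1 hk
      exact_mod_cast Nat.succ_le_of_lt this
    rw [max_eq_left (by linarith), min_eq_left (by linarith), mul_one]
  rw [Finset.sum_congr rfl h1, Finset.sum_range_sub]
  simp

lemma phiFun_nonneg (c : ℕ → ℝ) (hc : Monotone c) (h0 : 0 ≤ c 0) (t : ℝ) :
    0 ≤ phiFun c t := by
  apply add_nonneg h0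
  apply tsum_nonneg
  intro k
  apply mul_nonneg (sub_nonneg.2 (hc (Nat.le_succ k)))
  exact le_min zero_le_one (le_max_right _ _)

def IsMenger (X : Type*) [TopologicalSpace X] : Prop :=
  ∀ U : ℕ → Set (Set X),
    (∀ n, ∀ s ∈ U n, IsOpen s) → (∀ n, ⋃₀ U n = Set.univ) →
    ∃ V : ℕ → Set (Set X), (∀ n, V n ⊆ U n) ∧ (∀ n, (V n).Finite) ∧
      (⋃ n, ⋃₀ V n) = Set.univ

def ProjectivelyMenger (X : Type*) [TopologicalSpace X] : Prop :=
  ∀ (Z : Type) (_ : TopologicalSpace Z) (_ : SecondCountableTopology Z)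
    (f : X → Z), Continuous f → IsMenger (Set.range f)

def restrictSet (X : Type*) [TopologicalSpace X] (Y : Set X) : Set (Y → ℝ) :=
  {g | ∃ f : C(X, ℝ), g = fun y : Y => f ↑y}

theorem projMenger_Cp_implies_pseudocompact (X : Type*) [TopologicalSpace X] [T35Space X]
    (Y : Set X) (hY : Dense Y)
    (h : ProjectivelyMenger (restrictSet X Y)) :
    ∀ f : C(X, ℝ), ∃ M, ∀ x, |f x| ≤ M := by
  intro f
  by_contra hM
  push_neg at hM
  -- choose points of Y where |f| is large
  have hy : ∀ n : ℕ, ∃ y, y ∈ Y ∧ (n : ℝ) < |f y| := by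
    intro n
    obtain ⟨x, hx⟩ := hM n
    have hopen : IsOpen {x : X | (n : ℝ) < |f x|} :=
      isOpen_lt continuous_const f.continuous.abs
    obtain ⟨y, hy1, hy2⟩ := hY.inter_open_nonempty _ hopen ⟨x, hx⟩
    exact ⟨y, hy2, hy1⟩
  choose y hyY hyf using hy
  -- evaluation map into ℝ^ℕ
  set Φ : (restrictSet X Y) → (ℕ → ℝ) := fun g n => (g : Y → ℝ) ⟨y n, hyY n⟩ with hΦdef
  have hΦ : Continuous Φ := by
    apply continuous_pi
    intro n
    exact (continuous_apply _).comp continuous_subtype_val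
  have hMen := h (ℕ → ℝ) inferInstance inferInstance Φ hΦ
  -- the covers
  set U : ℕ → Set (Set (Set.range Φ)) :=
    fun m => {S | ∃ j : ℕ, S = {p : Set.range Φ | |(p : ℕ → ℝ) m| < j}} with hUdef
  have hUopen : ∀ m, ∀ s ∈ U m, IsOpen s := by
    rintro m s ⟨j, rfl⟩
    have : Continuous fun p : Set.range Φ => |(p : ℕ → ℝ) m| :=
      continuous_abs.comp ((continuous_apply m).comp continuous_subtype_val)
    exact isOpen_Iio.preimage this
  have hUcov : ∀ m, ⋃₀ U m = Set.univ := by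
    intro m
    apply Set.eq_univ_of_forall
    intro p
    obtain ⟨j, hj⟩ := exists_nat_gt (|(p : ℕ → ℝ) m|)
    exact ⟨_, ⟨j, rfl⟩, hj⟩
  obtain ⟨V, hVU, hVfin, hVcov⟩ := hMen U hUopen hUcov
  -- bounds from the finite subfamilies
  have hNex : ∀ m, ∃ N : ℕ, ∀ S ∈ V m, S ⊆ {p : Set.range Φ | |(p : ℕ → ℝ) m| < N} := by
    intro m
    classical
    obtain ⟨jb, hjb⟩ : ∃ jb : Set (Set.range Φ) → ℕ,
        ∀ S ∈ U m, S = {p : Set.range Φ | |(p : ℕ → ℝ) m| < jb S} := by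
      refine ⟨fun S => if hS : ∃ j : ℕ, S = {p : Set.range Φ | |(p : ℕ → ℝ) m| < j}
        then hS.choose else 0, ?_⟩
      intro S hS
      have hS' : ∃ j : ℕ, S = {p : Set.range Φ | |(p : ℕ → ℝ) m| < j} := hS
      beta_reduce
      rw [dif_pos hS']
      exact hS'.choose_spec
    refine ⟨(hVfin m).toFinset.sup jb, ?_⟩
    intro S hS p hp
    rw [hjb S (hVU m hS)] at hp
    have hle : jb S ≤ (hVfin m).toFinset.sup jb :=
      Finset.le_sup ((hVfin m).mem_toFinset.2 hS)
    have hle' : (jb S : ℝ) ≤ (((hVfin m).toFinset.sup jb : ℕ) : ℝ) := by exact_mod_cast hle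
    exact lt_of_lt_of_le hp hle'
  choose N hN using hNex
  -- the dominating monotone sequence
  set c : ℕ → ℝ := fun m => (((Finset.range (m + 1)).sup N : ℕ) : ℝ) with hc
  have hcmono : Monotone c := by
    intro a b hab
    simp only [hc]
    have : (Finset.range (a + 1)).sup N ≤ (Finset.range (b + 1)).sup N :=
      Finset.sup_mono (Finset.range_subset_range.2 (by omega))
    exact_mod_cast this
  have hc0 : 0 ≤ c 0 := by simp only [hc]; positivity
  have hcN : ∀ m, (N m : ℝ) ≤ c m := by
    intro m
    simp only [hc]
    have : N m ≤ (Finset.range (m + 1)).sup N :=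
      Finset.le_sup (Finset.self_mem_range_succ m)
    exact_mod_cast this
  -- the contradiction function
  set g : C(X, ℝ) := ⟨fun x => phiFun c (|f x|),
    (phiFun_continuous c).comp f.continuous.abs⟩ with hg
  have hgr : (fun yy : Y => g ↑yy) ∈ restrictSet X Y := ⟨g, rfl⟩
  set p : Set.range Φ := ⟨Φ ⟨_, hgr⟩, ⟨_, rfl⟩⟩ with hp
  have hpm : ∀ m, (p : ℕ → ℝ) m = phiFun c (|f (y m)|) := fun m => rfl
  have hcovp : p ∈ ⋃ n, ⋃₀ V n := hVcov ▸ Set.mem_univ p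
  obtain ⟨_, ⟨m, rfl⟩, S, hSV, hpS⟩ := hcovp
  have hlt : |(p : ℕ → ℝ) m| < N m := hN m S hSV hpS
  have hge : (N m : ℝ) ≤ |(p : ℕ → ℝ) m| := by
    rw [hpm m, abs_of_nonneg (phiFun_nonneg c hcmono hc0 _)]
    calc (N m : ℝ) ≤ c m := hcN m
      _ = phiFun c m := (phiFun_nat c m).symm
      _ ≤ phiFun c (|f (y m)|) := phiFun_mono c hcmono (le_of_lt (hyf m))
  exact absurd hlt (not_lt.2 hge)
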